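/- Let n be a natural number and let u, v, w be convex subsets of ℝⁿ with v ⊆ u. Then the following are equivalent: (a) there exists a convex set z ⊆ ℝⁿ such that convexHull(v ∪ z) ∩ w is a proper subset of convexHull(u ∪ z) ∩ w; (b) there exist a point p ∈ u and a point q ∈ w such that the ray drawn from q through p contains no point of v. -/

import Mathlib

/-- Lemma on strict inequalities `(u ∨ z) ∧ w > (v ∨ z) ∧ w` in `Conv(ℝⁿ)`:
such a `z` exists iff there are points `p ∈ u`, `q ∈ w` such that the ray drawn from `q`
through `p` contains no point of `v`. -/
theorem conv_exists_join_meet_ssubset_iff (n : ℕ) (u v w : Set (Fin n → ℝ))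
    (hu : Convex ℝ u) (hv : Convex ℝ v) (hw : Convex ℝ w) (hvu : v ⊆ u) :
    (∃ z : Set (Fin n → ℝ), Convex ℝ z ∧
        convexHull ℝ (v ∪ z) ∩ w ⊂ convexHull ℝ (u ∪ z) ∩ w) ↔
      (∃ p ∈ u, ∃ q ∈ w, ∀ l : ℝ, 0 ≤ l → l • p + (1 - l) • q ∉ v) := by
  constructor
  · rintro ⟨z, hz, hss⟩
    obtain ⟨x, hxbig, hxsmall⟩ := Set.exists_of_ssubset hss
    obtain ⟨hxhull, hxw⟩ := hxbig
    have hxnot : x ∉ convexHull ℝ (v ∪ z) := fun h => hxsmall ⟨h, hxw⟩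
    rcases Set.eq_empty_or_nonempty z with hze | hzne
    · subst hze
      simp only [Set.union_empty] at hxhull hxnot
      rw [hu.convexHull_eq] at hxhull
      refine ⟨x, hxhull, x, hxw, fun l hl hmem => hxnot ?_⟩
      have hx : l • x + (1 - l) • x = x := by
        rw [← add_smul]; simp
      rw [hx] at hmem
      exact subset_convexHull ℝ v hmem
    rcases Set.eq_empty_or_nonempty u with hue | hune
    · subst hue
      have hve : v = ∅ := Set.eq_empty_of_subset_empty hvu
      rw [hve] at hxnot
      exact absurd hxhull hxnot
    · rw [hu.convexHull_union hz hune hzne, mem_convexJoin] at hxhull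
      obtain ⟨a, ha, c, hc, t1, t2, ht1, ht2, hsum, hx⟩ := hxhull
      have ht1pos : 0 < t1 := by
        rcases ht1.lt_or_eq with h | h
        · exact h
        · exfalso
          apply hxnot
          have hxc : x = c := by
            rw [← hx, ← h]; simp [show t2 = 1 by linarith]
          rw [hxc]
          exact subset_convexHull ℝ _ (Set.mem_union_right _ hc)
      refine ⟨a, ha, x, hxw, fun l hl hy => hxnot ?_⟩
      have hd : 0 < t1 + l * t2 := by positivity
      have key : (t1 + l * t2) • x = t1 • (l • a + (1 - l) • x) + (l * t2) • c := by
        rw [← hx]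
        have ht2eq : t2 = 1 - t1 := by linarith
        subst ht2eq
        match_scalars <;> ring
      have hxeq : x = (t1 / (t1 + l * t2)) • (l • a + (1 - l) • x)
          + ((l * t2) / (t1 + l * t2)) • c := by
        rw [div_eq_inv_mul, div_eq_inv_mul, mul_smul, mul_smul, ← smul_add, ← key,
          inv_smul_smul₀ hd.ne']
      rw [hxeq]
      exact (convex_convexHull ℝ (v ∪ z))
        (subset_convexHull ℝ _ (Set.mem_union_left _ hy))
        (subset_convexHull ℝ _ (Set.mem_union_right _ hc))
        (by positivity) (by positivity)
        (by rw [← add_div, div_self hd.ne'])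
  · rintro ⟨p, hp, q, hq, hray⟩
    have hpv : p ∉ v := by
      have h := hray 1 zero_le_one
      simpa using h
    by_cases hpq : p = q
    · refine ⟨∅, convex_empty, ?_⟩
      rw [Set.union_empty, Set.union_empty, hu.convexHull_eq, hv.convexHull_eq,
        Set.ssubset_def]
      refine ⟨Set.inter_subset_inter_left w hvu, fun hsub => ?_⟩
      exact hpv (hsub ⟨hp, hpq ▸ hq⟩).1
    · set r := (2:ℝ) • q - p with hrdef
      refine ⟨{r}, convex_singleton r, ?_⟩
      rw [Set.ssubset_def]
      refine ⟨Set.inter_subset_inter_left w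
        (convexHull_mono (Set.union_subset_union_left _ hvu)), fun hsub => ?_⟩
      have hqmem : q ∈ convexHull ℝ (u ∪ {r}) ∩ w := by
        refine ⟨?_, hq⟩
        have h1 : p ∈ convexHull ℝ (u ∪ {r}) :=
          subset_convexHull ℝ _ (Set.mem_union_left _ hp)
        have h2 : r ∈ convexHull ℝ (u ∪ {r}) :=
          subset_convexHull ℝ _ (Set.mem_union_right _ rfl)
        have h3 := (convex_convexHull ℝ (u ∪ {r})) h1 h2
          (by norm_num : (0:ℝ) ≤ 1/2) (by norm_num : (0:ℝ) ≤ 1/2) (by norm_num)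
        have heq : (1/2 : ℝ) • p + (1/2 : ℝ) • r = q := by
          rw [hrdef]; match_scalars <;> ring
        rwa [heq] at h3
      obtain ⟨hqhull, -⟩ := hsub hqmem
      rcases Set.eq_empty_or_nonempty v with hve | hvne
      · rw [hve, Set.empty_union, convexHull_singleton, Set.mem_singleton_iff, hrdef] at hqhull
        apply hpq
        funext i
        have hi := congrFun hqhull i
        simp only [Pi.sub_apply, Pi.smul_apply, smul_eq_mul] at hi
        linarith
      · rw [hv.convexHull_union (convex_singleton r) hvne (Set.singleton_nonempty r),
          mem_convexJoin] at hqhull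
        obtain ⟨y, hy, c, hc, hseg⟩ := hqhull
        rw [Set.mem_singleton_iff] at hc
        subst hc
        obtain ⟨t1, t2, ht1, ht2, hsum, hqeq⟩ := hseg
        have ht1pos : 0 < t1 := by
          rcases ht1.lt_or_eq with h | h
          · exact h
          · exfalso
            apply hpq
            rw [← h] at hsum
            have hqr : t2 • r = q := by rw [← hqeq, ← h]; simp
            rw [hrdef, show t2 = 1 by linarith, one_smul] at hqr
            funext i
            have hi := congrFun hqr i
            simp only [Pi.sub_apply, Pi.smul_apply, smul_eq_mul] at hi
            linarith
        refine hray (t2 / t1) (by positivity) ?_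
        have h1 : t1 • y = q - t2 • r := eq_sub_of_add_eq hqeq
        have hkey : (t2 / t1) • p + (1 - t2 / t1) • q = y := by
          apply smul_right_injective (Fin n → ℝ) ht1pos.ne'
          show t1 • ((t2 / t1) • p + (1 - t2 / t1) • q) = t1 • y
          rw [h1, hrdef]
          have ht2eq : t2 = 1 - t1 := by linarith
          match_scalars <;> subst ht2eq <;> field_simp [ht1pos.ne'] <;> ring
        rw [hkey]
        exact hy
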